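/- arXiv:1706.02903 — 3 statements merged into one kernel-verified Lean document; each statement's English description precedes it below -/
import Mathlib

section
/- For c > 0 and μ > 0, the boundary value problem −v_xx − μ v_yy + c v = 0 on the strip [0,1)×(−ε,ε) with periodic boundary conditions in x, homogeneous Neumann condition v_y(x,−ε) = 0, and perturbed Neumann condition v_y(x,ε) = α ∂ᵏv/∂xᵏ(x,ε) with k an odd positive integer, has only the trivial solution v ≡ 0, provided α ≠ 0 restricted to Fourier modes: for each frequency ω ∈ 2πℤ, the Fourier-transformed two-point boundary value problem μ φ'' = (ω² + c)φ with φ'(−ε)=0 and φ'(ε) = α(iω)ᵏ φ(ε) has only the trivial solution. -/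
open Complex MeasureTheory intervalIntegral


/-- For `c > 0`, `μ > 0`, odd `k`, and any Fourier frequency `ω ∈ 2πℤ`, the
Fourier-transformed two-point boundary value problem `μ φ'' = (ω² + c) φ` on `[-ε,ε]`
with `φ'(-ε) = 0` and `φ'(ε) = α (iω)^k φ(ε)` has only the trivial solution. -/
theorem odd_perturbation_only_trivial_solution
    (ε c μ α : ℝ) (hε : 0 < ε) (hc : 0 < c) (hμ : 0 < μ)
    (k : ℕ) (hk : Odd k) (hk0 : 0 < k)
    (ω : ℝ) (hω : ∃ n : ℤ, ω = 2 * Real.pi * n)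
    (φ : ℝ → ℂ) (hφ : ContDiff ℝ 2 φ)
    (heq : ∀ y ∈ Set.Icc (-ε) ε,
      (μ : ℂ) * deriv (deriv φ) y = ((ω ^ 2 + c : ℝ) : ℂ) * φ y)
    (hbc1 : deriv φ (-ε) = 0)
    (hbc2 : deriv φ ε = (α : ℂ) * (Complex.I * (ω : ℂ)) ^ k * φ ε) :
    ∀ y ∈ Set.Icc (-ε) ε, φ y = 0 := by
  set κ2 : ℝ := ω ^ 2 + c with hκ2
  have hκ2pos : 0 < κ2 := by positivity
  -- basic differentiability facts
  have hd := contDiff_succ_iff_deriv.mp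
    (show ContDiff ℝ ((1 : WithTop ℕ∞) + 1) φ by norm_num; exact hφ)
  have hφd : Differentiable ℝ φ := hd.1
  have hdφ1 : ContDiff ℝ 1 (deriv φ) := hd.2.2
  have hdφd : Differentiable ℝ (deriv φ) := hdφ1.differentiable one_ne_zero
  have hddφc : Continuous (deriv (deriv φ)) := hdφ1.continuous_deriv le_rfl
  have hφc : Continuous φ := hφd.continuous
  have hdφc : Continuous (deriv φ) := hdφd.continuous
  -- the energy function and its derivative
  set g : ℝ → ℝ := fun y => ((μ : ℂ) * (deriv φ y * (starRingEnd ℂ) (φ y))).re with hg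
  set h : ℝ → ℝ := fun y => κ2 * Complex.normSq (φ y) + μ * Complex.normSq (deriv φ y)
    with hh
  have hderiv : ∀ y ∈ Set.uIcc (-ε) ε, HasDerivAt g (h y) y := by
    intro y hy
    rw [Set.uIcc_of_le (by linarith : -ε ≤ ε)] at hy
    have h1 : HasDerivAt (deriv φ) (deriv (deriv φ) y) y := (hdφd y).hasDerivAt
    have h2 : HasDerivAt (fun y => (starRingEnd ℂ) (φ y)) ((starRingEnd ℂ) (deriv φ y)) y :=
      (hφd y).hasDerivAt.star
    have h3 := ((h1.mul h2).const_mul (μ : ℂ))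
    have h4 : HasDerivAt g
        (((μ : ℂ) * (deriv (deriv φ) y * (starRingEnd ℂ) (φ y) +
          deriv φ y * (starRingEnd ℂ) (deriv φ y))).re) y :=
      Complex.reCLM.hasFDerivAt.comp_hasDerivAt y h3
    convert h4 using 1
    have : (μ : ℂ) * (deriv (deriv φ) y * (starRingEnd ℂ) (φ y) +
          deriv φ y * (starRingEnd ℂ) (deriv φ y))
        = (κ2 : ℂ) * (φ y * (starRingEnd ℂ) (φ y)) +
          (μ : ℂ) * (deriv φ y * (starRingEnd ℂ) (deriv φ y)) := by
      have := heq y hy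
      rw [mul_add]
      rw [show (μ : ℂ) * (deriv (deriv φ) y * (starRingEnd ℂ) (φ y)) =
        ((μ : ℂ) * deriv (deriv φ) y) * (starRingEnd ℂ) (φ y) by ring, this]
      push_cast
      ring
    rw [this]
    simp [Complex.mul_conj, hh]
  -- integrability of h
  have hhc : Continuous h := by
    apply Continuous.add
    · exact continuous_const.mul (Complex.continuous_normSq.comp hφc)
    · exact continuous_const.mul (Complex.continuous_normSq.comp hdφc)
  have hint : ∫ y in (-ε)..ε, h y = g ε - g (-ε) :=
    intervalIntegral.integral_eq_sub_of_hasDerivAt hderiv (hhc.intervalIntegrable _ _)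
  -- boundary values
  have hgneg : g (-ε) = 0 := by simp [hg, hbc1]
  have hgpos : g ε = 0 := by
    obtain ⟨m, rfl⟩ := hk
    have hI : (Complex.I * (ω : ℂ)) ^ (2 * m + 1)
        = ((-1 : ℝ) ^ m : ℂ) * Complex.I * ((ω ^ (2 * m + 1) : ℝ) : ℂ) := by
      rw [mul_pow, pow_succ, pow_mul, Complex.I_sq]
      push_cast
      ring
    rw [hg]
    simp only [hbc2, hI]
    rw [show (μ : ℂ) * ((α : ℂ) * (((-1 : ℝ) ^ m : ℂ) * Complex.I *
        ((ω ^ (2 * m + 1) : ℝ) : ℂ)) * φ ε * (starRingEnd ℂ) (φ ε))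
      = ((μ * α * (-1 : ℝ) ^ m * ω ^ (2 * m + 1) : ℝ) : ℂ) *
          (φ ε * (starRingEnd ℂ) (φ ε)) * Complex.I by push_cast; ring]
    rw [Complex.mul_conj]
    simp [← Complex.ofReal_pow]
  rw [hgneg, hgpos, sub_zero] at hint
  -- conclude
  intro y hy
  by_contra hne
  have hpos : 0 < ∫ y in (-ε)..ε, h y := by
    apply intervalIntegral.integral_pos (by linarith)
    · exact hhc.continuousOn
    · intro x _
      show (0:ℝ) ≤ κ2 * Complex.normSq (φ x) + μ * Complex.normSq (deriv φ x)
      have := Complex.normSq_nonneg (φ x)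
      have := Complex.normSq_nonneg (deriv φ x)
      positivity
    · exact ⟨y, hy, by
        show (0:ℝ) < κ2 * Complex.normSq (φ y) + μ * Complex.normSq (deriv φ y)
        have : 0 < Complex.normSq (φ y) := by
          simpa [Complex.normSq_pos] using hne
        have h2 : 0 ≤ Complex.normSq (deriv φ y) := Complex.normSq_nonneg _
        nlinarith⟩
  rw [hint] at hpos
  exact lt_irrefl 0 hpos
end

section
/- The function v(x,y,t) = e^{st+iωx}(e^{κy} + e^{−κ(y+2ε)}) solves the equation v_t = v_xx + v_yy − v on ℝ×(−ε,ε) with boundary conditions v_y(x,−ε,t) = 0 and v_y(x,ε,t) = −v_xx(x,ε,t) if and only if s = κ² − ω² − 1 and κ tanh(2κε) = ω². -/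
noncomputable def waveMode (ε κ ω s : ℝ) (x y t : ℝ) : ℂ :=
  Complex.exp ((s : ℂ) * t + Complex.I * ω * x) *
    (Complex.exp ((κ : ℂ) * y) + Complex.exp (-(κ : ℂ) * (y + 2 * ε)))

private lemma hasDerivAt_cexp_affine (a b : ℂ) (t : ℝ) :
    HasDerivAt (fun t' : ℝ => Complex.exp (a * t' + b)) (a * Complex.exp (a * t + b)) t := by
  have h : HasDerivAt (fun t' : ℝ => (t' : ℂ)) 1 t := Complex.ofRealCLM.hasDerivAt
  simpa [mul_comm] using ((h.const_mul a).add_const b).cexp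

private lemma derivT (ε κ ω s x y t : ℝ) :
    HasDerivAt (fun t' : ℝ => waveMode ε κ ω s x y t')
      ((s : ℂ) * waveMode ε κ ω s x y t) t := by
  have h := (hasDerivAt_cexp_affine (s : ℂ) (Complex.I * ω * x) t).mul_const
      (Complex.exp ((κ : ℂ) * y) + Complex.exp (-(κ : ℂ) * (y + 2 * ε)))
  simpa [waveMode, mul_assoc] using h

private lemma derivX (ε κ ω s x y t : ℝ) :
    HasDerivAt (fun x' : ℝ => waveMode ε κ ω s x' y t)
      (Complex.I * ω * waveMode ε κ ω s x y t) x := by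
  have h := (hasDerivAt_cexp_affine (Complex.I * (ω : ℂ)) ((s : ℂ) * t) x).mul_const
      (Complex.exp ((κ : ℂ) * y) + Complex.exp (-(κ : ℂ) * (y + 2 * ε)))
  have e : (fun x' : ℝ => Complex.exp (Complex.I * (ω:ℂ) * x' + (s:ℂ) * t) *
      (Complex.exp ((κ : ℂ) * y) + Complex.exp (-(κ : ℂ) * (y + 2 * ε))))
      = fun x' : ℝ => waveMode ε κ ω s x' y t := by
    funext x'; simp only [waveMode]; ring_nf
  rw [e] at h
  have e2 : Complex.I * (ω:ℂ) * Complex.exp (Complex.I * (ω:ℂ) * x + (s:ℂ) * t) *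
      (Complex.exp ((κ : ℂ) * y) + Complex.exp (-(κ : ℂ) * (y + 2 * ε)))
      = Complex.I * ω * waveMode ε κ ω s x y t := by
    simp only [waveMode]; ring_nf
  rw [e2] at h
  exact h

private lemma iteratedDerivX (ε κ ω s x y t : ℝ) :
    iteratedDeriv 2 (fun x' : ℝ => waveMode ε κ ω s x' y t) x
      = -(ω : ℂ) ^ 2 * waveMode ε κ ω s x y t := by
  rw [iteratedDeriv_succ, iteratedDeriv_one]
  have h1 : deriv (fun x' : ℝ => waveMode ε κ ω s x' y t)
      = fun x' : ℝ => Complex.I * ω * waveMode ε κ ω s x' y t :=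
    funext fun x' => (derivX ε κ ω s x' y t).deriv
  rw [h1, ((derivX ε κ ω s x y t).const_mul (Complex.I * (ω:ℂ))).deriv]
  have : Complex.I ^ 2 = -1 := Complex.I_sq
  ring_nf
  rw [this]; ring

private lemma derivY (ε κ ω s x y t : ℝ) :
    HasDerivAt (fun y' : ℝ => waveMode ε κ ω s x y' t)
      (Complex.exp ((s : ℂ) * t + Complex.I * ω * x) *
        ((κ : ℂ) * Complex.exp ((κ : ℂ) * y)
          - (κ : ℂ) * Complex.exp (-(κ : ℂ) * (y + 2 * ε)))) y := by
  have h1 := hasDerivAt_cexp_affine (κ : ℂ) 0 y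
  have h2 := hasDerivAt_cexp_affine (-(κ : ℂ)) (-((κ : ℂ) * (2 * ε))) y
  have h := (h1.add h2).const_mul (Complex.exp ((s : ℂ) * t + Complex.I * ω * x))
  have e : (fun y' : ℝ => Complex.exp ((s : ℂ) * t + Complex.I * ω * x) *
      (Complex.exp ((κ:ℂ) * y' + 0) + Complex.exp (-(κ:ℂ) * y' + -((κ:ℂ) * (2 * ε)))))
      = fun y' : ℝ => waveMode ε κ ω s x y' t := by
    funext y'; simp only [waveMode]; ring_nf
  simp only [Pi.add_apply] at h
  rw [e] at h
  convert h using 1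
  case e'_4 => rfl
  ring_nf

private lemma iteratedDerivY (ε κ ω s x y t : ℝ) :
    iteratedDeriv 2 (fun y' : ℝ => waveMode ε κ ω s x y' t) y
      = (κ : ℂ) ^ 2 * waveMode ε κ ω s x y t := by
  rw [iteratedDeriv_succ, iteratedDeriv_one]
  have h1 : deriv (fun y' : ℝ => waveMode ε κ ω s x y' t)
      = fun y' : ℝ => Complex.exp ((s : ℂ) * t + Complex.I * ω * x) *
        ((κ : ℂ) * Complex.exp ((κ : ℂ) * y')
          - (κ : ℂ) * Complex.exp (-(κ : ℂ) * (y' + 2 * ε))) :=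
    funext fun y' => (derivY ε κ ω s x y' t).deriv
  rw [h1]
  have g1 := hasDerivAt_cexp_affine (κ : ℂ) 0 y
  have g2 := hasDerivAt_cexp_affine (-(κ : ℂ)) (-((κ : ℂ) * (2 * ε))) y
  have h := ((g1.const_mul ((κ:ℂ))).sub (g2.const_mul ((κ:ℂ)))).const_mul
      (Complex.exp ((s : ℂ) * t + Complex.I * ω * x))
  have e : (fun y' : ℝ => Complex.exp ((s : ℂ) * t + Complex.I * ω * x) *
      ((κ:ℂ) * Complex.exp ((κ:ℂ) * y' + 0) - (κ:ℂ) * Complex.exp (-(κ:ℂ) * y' + -((κ:ℂ) * (2 * ε)))))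
      = fun y' : ℝ => Complex.exp ((s : ℂ) * t + Complex.I * ω * x) *
        ((κ : ℂ) * Complex.exp ((κ : ℂ) * y')
          - (κ : ℂ) * Complex.exp (-(κ : ℂ) * (y' + 2 * ε))) := by
    funext y'; ring_nf
  simp only [Pi.sub_apply] at h
  rw [e] at h
  rw [h.deriv]
  simp only [waveMode]; ring_nf

private lemma waveMode_ne_zero (ε κ ω s x y t : ℝ) : waveMode ε κ ω s x y t ≠ 0 := by
  simp only [waveMode]
  refine mul_ne_zero (Complex.exp_ne_zero _) ?_
  have e1 : (κ:ℂ) * y = ((κ * y : ℝ) : ℂ) := by push_cast; ring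
  have e2 : -(κ:ℂ) * (y + 2 * ε) = ((-(κ * (y + 2 * ε)) : ℝ) : ℂ) := by push_cast; ring
  rw [e1, e2, ← Complex.ofReal_exp, ← Complex.ofReal_exp, ← Complex.ofReal_add]
  exact_mod_cast (by positivity : (0:ℝ) < Real.exp (κ * y) + Real.exp (-(κ * (y + 2 * ε)))).ne'

private lemma tanh_iff (ε κ ω : ℝ) :
    κ * (Real.exp (κ * ε) - Real.exp (-(κ * (ε + 2 * ε)))) =
      ω ^ 2 * (Real.exp (κ * ε) + Real.exp (-(κ * (ε + 2 * ε)))) ↔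
    κ * Real.tanh (2 * κ * ε) = ω ^ 2 := by
  have hE : 0 < Real.exp (κ * ε) := Real.exp_pos _
  set E := Real.exp (κ * ε) with hEdef
  have h3 : Real.exp (-(κ * (ε + 2 * ε))) = (E ^ 3)⁻¹ := by
    rw [show -(κ * (ε + 2 * ε)) = -((3:ℕ) * (κ * ε)) by push_cast; ring,
      Real.exp_neg, Real.exp_nat_mul]
  have h2 : Real.exp (2 * κ * ε) = E ^ 2 := by
    rw [show 2 * κ * ε = (2:ℕ) * (κ * ε) by push_cast; ring, Real.exp_nat_mul]
  have h2' : Real.exp (-(2 * κ * ε)) = (E ^ 2)⁻¹ := by rw [Real.exp_neg, h2]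
  rw [Real.tanh_eq_sinh_div_cosh, Real.sinh_eq, Real.cosh_eq, h3, h2, h2']
  rw [div_div_div_cancel_right₀ (c := 2)]
  case hc => norm_num
  constructor <;> intro h
  · field_simp at h ⊢
    nlinarith [pow_pos hE 2, pow_pos hE 3, pow_pos hE 4]
  · field_simp at h ⊢
    nlinarith [pow_pos hE 2, pow_pos hE 3, pow_pos hE 4]

private lemma cexp_cast1 (κ ε : ℝ) :
    Complex.exp ((κ:ℂ) * (ε:ℂ)) = ((Real.exp (κ * ε) : ℝ) : ℂ) := by
  rw [show (κ:ℂ) * (ε:ℂ) = ((κ * ε : ℝ) : ℂ) by push_cast; ring, Complex.ofReal_exp]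

private lemma cexp_cast2 (κ ε : ℝ) :
    Complex.exp (-(κ:ℂ) * ((ε:ℂ) + 2 * (ε:ℂ))) = ((Real.exp (-(κ * (ε + 2 * ε))) : ℝ) : ℂ) := by
  rw [show -(κ:ℂ) * ((ε:ℂ) + 2 * (ε:ℂ)) = ((-(κ * (ε + 2 * ε)) : ℝ) : ℂ) by push_cast; ring,
    Complex.ofReal_exp]

/-- `v(x,y,t) = e^{st+iωx}(e^{κy} + e^{−κ(y+2ε)})` solves `v_t = v_xx + v_yy − v` on
`ℝ×(−ε,ε)` with `v_y(x,−ε,t) = 0` and `v_y(x,ε,t) = −v_xx(x,ε,t)` if and only if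
`s = κ² − ω² − 1` and `κ tanh(2κε) = ω²`. -/
theorem waveMode_solves_iff (ε κ ω s : ℝ) (hε : 0 < ε) :
    ((∀ x t : ℝ, ∀ y ∈ Set.Icc (-ε) ε,
        deriv (fun t' => waveMode ε κ ω s x y t') t =
          iteratedDeriv 2 (fun x' => waveMode ε κ ω s x' y t) x +
            iteratedDeriv 2 (fun y' => waveMode ε κ ω s x y' t) y -
              waveMode ε κ ω s x y t) ∧
      (∀ x t : ℝ, deriv (fun y => waveMode ε κ ω s x y t) (-ε) = 0) ∧
      (∀ x t : ℝ, deriv (fun y => waveMode ε κ ω s x y t) ε =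
        -iteratedDeriv 2 (fun x' => waveMode ε κ ω s x' ε t) x)) ↔
    (s = κ ^ 2 - ω ^ 2 - 1 ∧ κ * Real.tanh (2 * κ * ε) = ω ^ 2) := by
  constructor
  · rintro ⟨hpde, _hbc1, hbc2⟩
    constructor
    · have h := hpde 0 0 0 ⟨by linarith, by linarith⟩
      rw [(derivT ε κ ω s 0 0 0).deriv, iteratedDerivX, iteratedDerivY] at h
      have hv := waveMode_ne_zero ε κ ω s 0 0 0
      have h' : (s : ℂ) * waveMode ε κ ω s 0 0 0
          = ((κ ^ 2 - ω ^ 2 - 1 : ℝ) : ℂ) * waveMode ε κ ω s 0 0 0 := by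
        push_cast; linear_combination h
      have := mul_right_cancel₀ hv h'
      exact_mod_cast this
    · have h := hbc2 0 0
      rw [(derivY ε κ ω s 0 ε 0).deriv, iteratedDerivX] at h
      simp only [waveMode] at h
      have hA : Complex.exp ((s:ℂ) * (0:ℝ) + Complex.I * ω * (0:ℝ)) ≠ 0 :=
        Complex.exp_ne_zero _
      have hC : (κ:ℂ) * Complex.exp ((κ:ℂ) * (ε:ℂ))
            - (κ:ℂ) * Complex.exp (-(κ:ℂ) * ((ε:ℂ) + 2 * (ε:ℂ)))
          = ((ω:ℂ))^2 * (Complex.exp ((κ:ℂ) * (ε:ℂ))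
            + Complex.exp (-(κ:ℂ) * ((ε:ℂ) + 2 * (ε:ℂ)))) :=
        mul_left_cancel₀ hA (by linear_combination h)
      rw [cexp_cast1, cexp_cast2] at hC
      have hR : κ * Real.exp (κ * ε) - κ * Real.exp (-(κ * (ε + 2 * ε)))
          = ω ^ 2 * (Real.exp (κ * ε) + Real.exp (-(κ * (ε + 2 * ε)))) := by
        exact_mod_cast hC
      rw [← tanh_iff ε κ ω]
      linear_combination hR
  · rintro ⟨hs, htanh⟩
    have hR := (tanh_iff ε κ ω).mpr htanh
    refine ⟨fun x t y _hy => ?_, fun x t => ?_, fun x t => ?_⟩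
    · rw [(derivT ε κ ω s x y t).deriv, iteratedDerivX, iteratedDerivY]
      subst hs; push_cast; ring
    · rw [(derivY ε κ ω s x (-ε) t).deriv]
      have e : Complex.exp (-(κ:ℂ) * (((-ε : ℝ) : ℂ) + 2 * (ε:ℂ)))
          = Complex.exp ((κ:ℂ) * ((-ε : ℝ) : ℂ)) := by
        congr 1; push_cast; ring
      rw [e]; ring
    · rw [(derivY ε κ ω s x ε t).deriv, iteratedDerivX]
      simp only [waveMode]
      have hC : (κ:ℂ) * Complex.exp ((κ:ℂ) * (ε:ℂ))
            - (κ:ℂ) * Complex.exp (-(κ:ℂ) * ((ε:ℂ) + 2 * (ε:ℂ)))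
          = ((ω:ℂ))^2 * (Complex.exp ((κ:ℂ) * (ε:ℂ))
            + Complex.exp (-(κ:ℂ) * ((ε:ℂ) + 2 * (ε:ℂ)))) := by
        rw [cexp_cast1, cexp_cast2]
        exact_mod_cast congrArg (fun r : ℝ => (r : ℂ))
          (by linear_combination hR :
            κ * Real.exp (κ * ε) - κ * Real.exp (-(κ * (ε + 2 * ε)))
              = ω ^ 2 * (Real.exp (κ * ε) + Real.exp (-(κ * (ε + 2 * ε)))))
      linear_combination Complex.exp ((s:ℂ) * t + Complex.I * ω * x) * hC
end

section
/- For the wave-equation boundary eigenvalue condition with even k: the equation κ tanh(2κε) = α̃ωᵏ (with α̃ = αiᵏ real) admits a positive real solution κ for each ω ≠ 0 when α̃ > 0, and in that case s = (κ² − ω²)^{1/2} is real and positive whenever κ > |ω|; conversely if α̃ < 0 every solution κ is purely imaginary, so s² = κ² − ω² ≤ −ω² and s is purely imaginary, hence the mode e^{st} does not grow. -/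
private lemma csinh_re (z : ℂ) :
    (Complex.sinh z).re = Real.sinh z.re * Real.cos z.im := by
  have : z = (z.re : ℂ) + (z.im : ℂ) * Complex.I := (Complex.re_add_im z).symm
  rw [this, Complex.sinh_add, Complex.sinh_mul_I, Complex.cosh_mul_I,
    ← Complex.ofReal_sinh, ← Complex.ofReal_cosh, ← Complex.ofReal_cos, ← Complex.ofReal_sin]
  simp [Complex.add_re, Complex.mul_re, Complex.mul_im, Complex.sinh_ofReal_re,
    Complex.cosh_ofReal_re, Complex.sin_ofReal_re, Complex.cos_ofReal_re]

private lemma csinh_im (z : ℂ) :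
    (Complex.sinh z).im = Real.cosh z.re * Real.sin z.im := by
  have : z = (z.re : ℂ) + (z.im : ℂ) * Complex.I := (Complex.re_add_im z).symm
  rw [this, Complex.sinh_add, Complex.sinh_mul_I, Complex.cosh_mul_I,
    ← Complex.ofReal_sinh, ← Complex.ofReal_cosh, ← Complex.ofReal_cos, ← Complex.ofReal_sin]
  simp [Complex.add_im, Complex.mul_re, Complex.mul_im, Complex.sinh_ofReal_re,
    Complex.cosh_ofReal_re, Complex.sin_ofReal_re, Complex.cos_ofReal_re,
    (Real.cosh_pos _).ne']

private lemma ccosh_re (z : ℂ) :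
    (Complex.cosh z).re = Real.cosh z.re * Real.cos z.im := by
  have : z = (z.re : ℂ) + (z.im : ℂ) * Complex.I := (Complex.re_add_im z).symm
  rw [this, Complex.cosh_add, Complex.sinh_mul_I, Complex.cosh_mul_I,
    ← Complex.ofReal_sinh, ← Complex.ofReal_cosh, ← Complex.ofReal_cos, ← Complex.ofReal_sin]
  simp [Complex.add_re, Complex.mul_re, Complex.mul_im, Complex.sinh_ofReal_re,
    Complex.cosh_ofReal_re, Complex.sin_ofReal_re, Complex.cos_ofReal_re]

private lemma ccosh_im (z : ℂ) :
    (Complex.cosh z).im = Real.sinh z.re * Real.sin z.im := by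
  have : z = (z.re : ℂ) + (z.im : ℂ) * Complex.I := (Complex.re_add_im z).symm
  rw [this, Complex.cosh_add, Complex.sinh_mul_I, Complex.cosh_mul_I,
    ← Complex.ofReal_sinh, ← Complex.ofReal_cosh, ← Complex.ofReal_cos, ← Complex.ofReal_sin]
  simp [Complex.add_im, Complex.mul_re, Complex.mul_im, Complex.sinh_ofReal_re,
    Complex.cosh_ofReal_re, Complex.sin_ofReal_re, Complex.cos_ofReal_re,
    (Real.cosh_pos _).ne']

private lemma tanh_mono {a b : ℝ} (hab : a ≤ b) : Real.tanh a ≤ Real.tanh b := by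
  rw [Real.tanh_eq_sinh_div_cosh, Real.tanh_eq_sinh_div_cosh,
    div_le_div_iff₀ (Real.cosh_pos a) (Real.cosh_pos b)]
  have h0 : 0 ≤ Real.sinh (b - a) := by
    rcases eq_or_lt_of_le (by linarith : (0:ℝ) ≤ b - a) with h | h
    · rw [← h, Real.sinh_zero]
    · have h2 : Real.sinh 0 < Real.sinh (b - a) := Real.sinh_lt_sinh.2 h
      rw [Real.sinh_zero] at h2; linarith
  nlinarith [Real.sinh_sub b a, Real.cosh_pos a, Real.cosh_pos b]

set_option maxHeartbeats 1000000 in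
/-- For the wave-equation boundary eigenvalue condition with even `k` and `α̃ = αiᵏ` real:
if `α̃ > 0` the equation `κ tanh(2κε) = α̃ωᵏ` has a positive real root `κ`, and then
`s = √(κ² − ω²)` is real and positive whenever `κ > |ω|`; if `α̃ < 0`, every complex
solution `κ` is purely imaginary, so `s² = κ² − ω²` is real with `s² ≤ −ω²`, i.e. `s`
is purely imaginary and the mode `e^{st}` does not grow. -/
theorem wave_even_perturbation_stability_dichotomy
    (ε ω α' : ℝ) (hε : 0 < ε) (hω : ω ≠ 0) (k : ℕ) (hk : Even k) (hk0 : 0 < k) :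
    (0 < α' → ∃ κ : ℝ, 0 < κ ∧ κ * Real.tanh (2 * κ * ε) = α' * ω ^ k ∧
      (|ω| < κ → 0 < Real.sqrt (κ ^ 2 - ω ^ 2))) ∧
    (α' < 0 → ∀ κ : ℂ, κ * Complex.tanh (2 * κ * ε) = ((α' * ω ^ k : ℝ) : ℂ) →
      κ.re = 0 ∧ (κ ^ 2 - (ω : ℂ) ^ 2).im = 0 ∧ (κ ^ 2 - (ω : ℂ) ^ 2).re ≤ -ω ^ 2) := by
  have hωk : 0 < ω ^ k := hk.pow_pos hω
  have htanh : Continuous Real.tanh := by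
    have : Real.tanh = fun x => Real.sinh x / Real.cosh x := by
      funext x; exact Real.tanh_eq_sinh_div_cosh x
    rw [this]
    exact Real.continuous_sinh.div Real.continuous_cosh fun x => (Real.cosh_pos x).ne'
  constructor
  · intro hα
    set t := α' * ω ^ k with ht
    have ht0 : 0 < t := mul_pos hα hωk
    have htanhε : 0 < Real.tanh (2 * ε) := by
      rw [Real.tanh_eq_sinh_div_cosh]
      exact div_pos (by positivity) (Real.cosh_pos _)
    set M : ℝ := max 1 (t / Real.tanh (2 * ε)) with hM
    have hM1 : (1:ℝ) ≤ M := le_max_left _ _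
    have hM0 : 0 ≤ M := by linarith
    have hfM : t ≤ M * Real.tanh (2 * M * ε) := by
      have h1 : Real.tanh (2 * ε) ≤ Real.tanh (2 * M * ε) := tanh_mono (by nlinarith)
      have h2 : t / Real.tanh (2 * ε) ≤ M := le_max_right _ _
      have : t ≤ M * Real.tanh (2 * ε) := by
        rw [div_le_iff₀ htanhε] at h2; linarith
      nlinarith
    have hcont : ContinuousOn (fun κ : ℝ => κ * Real.tanh (2 * κ * ε)) (Set.Icc 0 M) :=
      (continuous_id.mul (htanh.comp (by continuity))).continuousOn
    have := intermediate_value_Icc hM0 hcont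
    have hmem : t ∈ Set.Icc ((fun κ : ℝ => κ * Real.tanh (2 * κ * ε)) 0)
        ((fun κ : ℝ => κ * Real.tanh (2 * κ * ε)) M) := by
      simp only [Set.mem_Icc]
      constructor
      · simp [ht0.le]
      · exact hfM
    obtain ⟨κ, hκmem, hκeq⟩ := this hmem
    refine ⟨κ, ?_, hκeq, ?_⟩
    · rcases lt_or_eq_of_le hκmem.1 with h | h
      · exact h
      · exfalso; rw [← h] at hκeq; simp at hκeq; linarith
    · intro habs
      apply Real.sqrt_pos.2
      have : ω ^ 2 < κ ^ 2 := by
        have := abs_nonneg ω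
        nlinarith [sq_abs ω]
      linarith
  · intro hα κ hκ
    have hc : α' * ω ^ k < 0 := mul_neg_of_neg_of_pos hα hωk
    set c : ℝ := α' * ω ^ k with hcdef
    set w : ℂ := 2 * κ * ε with hw
    have hcoshne : Complex.cosh w ≠ 0 := by
      intro h
      rw [Complex.tanh_eq_sinh_div_cosh, h, div_zero, mul_zero] at hκ
      have : c = 0 := by exact_mod_cast hκ.symm
      linarith
    have heq : κ * Complex.sinh w = (c : ℂ) * Complex.cosh w := by
      rw [Complex.tanh_eq_sinh_div_cosh] at hκ
      field_simp at hκ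
      linear_combination hκ
    set x := κ.re with hx
    set y := κ.im with hy
    have hwre : w.re = 2 * x * ε := by simp [hw, Complex.mul_re, Complex.mul_im]; left; rfl
    have hwim : w.im = 2 * y * ε := by simp [hw, Complex.mul_re, Complex.mul_im]; left; rfl
    set u := 2 * x * ε with hu
    set v := 2 * y * ε with hv
    set Sh := Real.sinh u with hSh
    set Ch := Real.cosh u with hCh
    set Sv := Real.sin v with hSv
    set Cv := Real.cos v with hCv
    have e1 : x * (Sh * Cv) - y * (Ch * Sv) = c * (Ch * Cv) := by
      have := congrArg Complex.re heq
      simpa [Complex.mul_re, csinh_re, csinh_im, ccosh_re, ccosh_im, hwre, hwim,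
        hu, hv, hSh, hCh, hSv, hCv, mul_comm, mul_assoc, mul_left_comm] using this
    have e2 : x * (Ch * Sv) + y * (Sh * Cv) = c * (Sh * Sv) := by
      have := congrArg Complex.im heq
      simpa [Complex.mul_im, csinh_re, csinh_im, ccosh_re, ccosh_im, hwre, hwim,
        hu, hv, hSh, hCh, hSv, hCv, mul_comm, mul_assoc, mul_left_comm] using this
    have hpy : Sv ^ 2 + Cv ^ 2 = 1 := Real.sin_sq_add_cos_sq v
    have hhp : Ch ^ 2 - Sh ^ 2 = 1 := Real.cosh_sq_sub_sinh_sq u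
    have hD : 0 < Ch ^ 2 * Cv ^ 2 + Sh ^ 2 * Sv ^ 2 := by
      have h0 : 0 < Complex.normSq (Complex.cosh w) := Complex.normSq_pos.2 hcoshne
      have : Complex.normSq (Complex.cosh w) = (Ch * Cv) ^ 2 + (Sh * Sv) ^ 2 := by
        rw [Complex.normSq_apply, ccosh_re, ccosh_im, hwre, hwim]
        ring
      nlinarith
    have key : (x ^ 2 + y ^ 2) * (Sh * Ch) = x * c * (Ch ^ 2 * Cv ^ 2 + Sh ^ 2 * Sv ^ 2) := by
      linear_combination (x*Ch*Cv - y*Sh*Sv) * e1 + (x*Sh*Sv + y*Ch*Cv) * e2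
        - (x^2+y^2)*Sh*Ch * hpy
    have hx0 : x = 0 := by
      by_contra hx0
      rcases lt_or_gt_of_ne hx0 with hneg | hpos
      · have hShneg : Sh < 0 := by
          rw [hSh]; exact Real.sinh_neg_iff.2 (by nlinarith)
        have hChpos : 0 < Ch := Real.cosh_pos u
        have hL : (x ^ 2 + y ^ 2) * (Sh * Ch) < 0 :=
          mul_neg_of_pos_of_neg (by nlinarith [sq_nonneg y, sq_nonneg x])
            (mul_neg_of_neg_of_pos hShneg hChpos)
        have hR : 0 < x * c * (Ch ^ 2 * Cv ^ 2 + Sh ^ 2 * Sv ^ 2) :=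
          mul_pos (mul_pos_of_neg_of_neg hneg hc) hD
        linarith [key]
      · have hShpos : 0 < Sh := by
          rw [hSh]; exact Real.sinh_pos_iff.2 (by nlinarith)
        have hChpos : 0 < Ch := Real.cosh_pos u
        have hL : 0 < (x ^ 2 + y ^ 2) * (Sh * Ch) :=
          mul_pos (by nlinarith [sq_nonneg y, sq_nonneg x]) (mul_pos hShpos hChpos)
        have hR : x * c * (Ch ^ 2 * Cv ^ 2 + Sh ^ 2 * Sv ^ 2) < 0 :=
          mul_neg_of_neg_of_pos (mul_neg_of_pos_of_neg hpos hc) hD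
        linarith [key]
    refine ⟨hx0, ?_, ?_⟩
    · simp [Complex.sub_im, Complex.sq_norm, pow_two, Complex.mul_im, ← hx, ← hy, hx0]
    · simp only [Complex.sub_re, pow_two, Complex.mul_re, ← hx, ← hy, hx0,
        Complex.ofReal_re, Complex.ofReal_im]
      nlinarith [sq_nonneg y]
end
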